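/- Let A and B be preorders and f : A → B a monotone map, and let F be the induced functor between the associated (ordinary) categories. Then F is a lax epimorphism if and only if for all b, b' ∈ B with b ≤ b', the full subcategory of A on the set {a ∈ A | b ≤ f a and f a ≤ b'} is a connected category (in particular nonempty, with any two of its objects joined by a zigzag of inequalities within the set). -/

import Mathlib

open CategoryTheory

universe v₄ u₄ u

namespace PreorderLaxEpiAux

/-- A small `Set`-like category. -/
def Obj : Type u₄ := ULift.{u₄} (Set Prop)

instance : Category.{v₄} Obj.{u₄} where
  Hom X Y := ULift.{v₄} (↥X.down → ↥Y.down)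
  id _ := ⟨fun x => x⟩
  comp f g := ⟨fun x => g.down (f.down x)⟩
  id_comp _ := rfl
  comp_id _ := rfl
  assoc _ _ _ := rfl

section
variable {A B : Type u} [Preorder A] [Preorder B] (f : A → B) (hf : Monotone f)
  (b b' : B) (L : A → Prop)

/-- The "representable at `b`" functor. -/
noncomputable def Gfun : B ⥤ Obj.{u₄} where
  obj b'' := ⟨{_p : Prop | b ≤ b''}⟩
  map {b₁ b₂} m := ⟨fun x => ⟨x.1, le_trans x.2 m.le⟩⟩
  map_id _ := rfl
  map_comp _ _ := rfl

/-- The labeled quotient functor. -/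
noncomputable def Hfun : B ⥤ Obj.{u₄} where
  obj b'' := ⟨{p : Prop | ∃ a, b ≤ f a ∧ f a ≤ b'' ∧ p = ((b'' ≤ b') → L a)}⟩
  map {b₁ b₂} m := ⟨fun x => ⟨(b₂ ≤ b') → x.1, by
    obtain ⟨a, h₁, h₂, hx⟩ := x.2
    refine ⟨a, h₁, h₂.trans m.le, ?_⟩
    rw [hx]
    exact propext ⟨fun h hb => h hb ((m.le).trans hb), fun h hb _ => h hb⟩⟩⟩
  map_id b'' := by
    apply ULift.ext
    funext x
    apply Subtype.ext
    obtain ⟨a, h₁, h₂, hx⟩ := x.2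
    show ((b'' ≤ b') → x.1) = x.1
    rw [hx]
    exact propext ⟨fun h hb => h hb hb, fun h hb _ => h hb⟩
  map_comp {b₁ b₂ b₃} m m' := by
    apply ULift.ext
    funext x
    apply Subtype.ext
    show ((b₃ ≤ b') → x.1) = ((b₃ ≤ b') → (b₂ ≤ b') → x.1)
    exact propext ⟨fun h hb₃ hb₂ => h hb₃, fun h hb₃ => h hb₃ ((m'.le).trans hb₃)⟩

variable {f}

/-- The natural transformation to extend, assuming the labeling is invariant. -/
noncomputable def gam (hL : ∀ (a a' : A), a ≤ a' → b ≤ f a → f a' ≤ b' →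
      ((f a ≤ b' → L a) ↔ L a')) :
    hf.functor ⋙ Gfun b ⟶ hf.functor ⋙ Hfun f b b' L where
  app a := ⟨fun x => ⟨(f a ≤ b') → L a, ⟨a, x.2, le_rfl, rfl⟩⟩⟩
  naturality {a a'} m := by
    apply ULift.ext
    funext x
    apply Subtype.ext
    show ((f a' ≤ b') → L a') = ((f a' ≤ b') → (f a ≤ b') → L a)
    exact propext ⟨fun h hb' hfa => (hL a a' m.le x.2 hb').mpr (h hb') hfa,
      fun h hb' => (hL a a' m.le x.2 hb').mp (h hb')⟩

lemma congr_down {X Y : Obj.{u₄}} {g g' : X ⟶ Y} (h : g = g') (x : ↥X.down) :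
    g.down x = g'.down x := by rw [h]

/-- Key extraction from fullness of precomposition. -/
lemma key (hb : b ≤ b')
    (hfull : ((@Functor.whiskeringLeft A _ B _ Obj.{u₄} (inferInstance : Category.{v₄} Obj.{u₄})).obj hf.functor).Full)
    (hL : ∀ (a a' : A), a ≤ a' → b ≤ f a → f a' ≤ b' →
      ((f a ≤ b' → L a) ↔ L a')) :
    ∃ q : Prop,
      (∃ a, b ≤ f a ∧ f a ≤ b' ∧ q = ((b' ≤ b') → L a)) ∧
      (∀ a, b ≤ f a → f a ≤ b' → q = ((b' ≤ b') → (f a ≤ b') → L a)) := by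
  obtain ⟨α, hα⟩ := hfull.map_surjective (gam hf b b' L hL)
  refine ⟨((α.app b').down ⟨True, hb⟩).1, ((α.app b').down ⟨True, hb⟩).2, ?_⟩
  intro a h₁ h₂
  have hn := α.naturality (homOfLE h₂)
  have happ := NatTrans.congr_app hα a
  have h4 := congr_down happ ⟨True, h₁⟩
  have h3 := congr_down hn ⟨True, h₁⟩
  calc ((α.app b').down ⟨True, hb⟩).1
      = (((Hfun.{u₄, u, v₄} f b b' L).map (homOfLE h₂)).down
          (((gam.{u, u₄, v₄} hf b b' L hL).app a).down ⟨True, h₁⟩)).1 :=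
        congrArg Subtype.val (Eq.trans rfl (Eq.trans h3
          (congrArg (((Hfun.{u₄, u, v₄} f b b' L).map (homOfLE h₂)).down) h4)))
    _ = ((b' ≤ b') → (f a ≤ b') → L a) := rfl

end

section Converse
variable {A B : Type u} [Preorder A] [Preorder B] {f : A → B} (hf : Monotone f)
  {C : Type u₄} [Category.{v₄} C]

lemma app_eq {G H : B ⥤ C} (α : G ⟶ H) {bb : B} {a : A}
    (h₁ : bb ≤ f a) (h₂ : f a ≤ bb) :
    α.app bb = G.map (homOfLE h₁) ≫ α.app (f a) ≫ H.map (homOfLE h₂) := by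
  rw [← Category.assoc, α.naturality (homOfLE h₁), Category.assoc, ← H.map_comp]
  have e : homOfLE h₁ ≫ homOfLE h₂ = 𝟙 bb := Subsingleton.elim _ _
  rw [e, H.map_id, Category.comp_id]

def phi {G H : B ⥤ C} (γ : hf.functor ⋙ G ⟶ hf.functor ⋙ H) {b b' : B}
    (x : ObjectProperty.FullSubcategory fun a : A => b ≤ f a ∧ f a ≤ b') : G.obj b ⟶ H.obj b' :=
  G.map (homOfLE x.property.1) ≫ γ.app x.obj ≫ H.map (homOfLE x.property.2)

lemma phi_const {G H : B ⥤ C} (γ : hf.functor ⋙ G ⟶ hf.functor ⋙ H) {b b' : B}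
    (hc : CategoryTheory.IsConnected (ObjectProperty.FullSubcategory fun a : A => b ≤ f a ∧ f a ≤ b'))
    (x y : ObjectProperty.FullSubcategory fun a : A => b ≤ f a ∧ f a ≤ b') :
    phi hf γ x = phi hf γ y := by
  apply constant_of_preserves_morphisms (phi hf γ)
  intro j₁ j₂ m
  have nat' : G.map (hf.functor.map m.hom) ≫ γ.app j₂.obj =
      γ.app j₁.obj ≫ H.map (hf.functor.map m.hom) := γ.naturality m.hom
  unfold phi
  have e1 : (homOfLE j₁.property.2 : f j₁.obj ⟶ b') =
      hf.functor.map m.hom ≫ homOfLE j₂.property.2 := Subsingleton.elim _ _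
  have e2 : (homOfLE j₂.property.1 : b ⟶ f j₂.obj) =
      homOfLE j₁.property.1 ≫ hf.functor.map m.hom := Subsingleton.elim _ _
  erw [e1, e2]
  simp only [Functor.map_comp, Category.assoc]
  erw [← reassoc_of% nat']
  exact ((congrArg (· ≫ _) (G.map_comp _ _)).trans (Category.assoc _ _ _)).symm

end Converse
end PreorderLaxEpiAux

open PreorderLaxEpiAux

/-- An ordinary functor between preorders (viewed as categories) is a lax
epimorphism iff for all `b ≤ b'` in the codomain, the full subcategory
`{a | b ≤ f a ∧ f a ≤ b'}` of the domain is a connected category. -/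
theorem preorder_functor_laxEpi_iff_connected
    {A B : Type u} [Preorder A] [Preorder B] (f : A → B) (hf : Monotone f) :
    (∀ (C : Type u₄) (_ : Category.{v₄} C),
      ((Functor.whiskeringLeft A B C).obj hf.functor).Full ∧
        ((Functor.whiskeringLeft A B C).obj hf.functor).Faithful) ↔
    (∀ b b' : B, b ≤ b' →
      CategoryTheory.IsConnected (ObjectProperty.FullSubcategory fun a : A => b ≤ f a ∧ f a ≤ b')) := by
  constructor
  · intro hlax b b' hb
    have hfull := (hlax Obj.{u₄} inferInstance).1
    -- nonemptiness
    obtain ⟨q₀, ⟨a₁, ha₁, ha₁', -⟩, -⟩ := key hf b b' (fun _ => True) hb hfull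
      (fun a a' _ _ _ => ⟨fun _ => trivial, fun _ _ => trivial⟩)
    let a₁el : ObjectProperty.FullSubcategory fun a : A => b ≤ f a ∧ f a ≤ b' := ⟨a₁, ha₁, ha₁'⟩
    -- connectivity via the zigzag labeling
    have hL : ∀ (a a' : A), a ≤ a' → b ≤ f a → f a' ≤ b' →
        ((f a ≤ b' → ∀ (h₁ : b ≤ f a) (h₂ : f a ≤ b'), Zigzag (⟨a, h₁, h₂⟩ :
          ObjectProperty.FullSubcategory fun a : A => b ≤ f a ∧ f a ≤ b') a₁el) ↔
         (∀ (h₁ : b ≤ f a') (h₂ : f a' ≤ b'), Zigzag (⟨a', h₁, h₂⟩ :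
          ObjectProperty.FullSubcategory fun a : A => b ≤ f a ∧ f a ≤ b') a₁el)) := by
      intro a a' maa' hba hfa'
      constructor
      · intro h h₁' h₂'
        exact Zigzag.trans
          (Relation.ReflTransGen.single (Or.inr ⟨ObjectProperty.homMk (P := _) (homOfLE maa')⟩))
          (h ((hf maa').trans h₂') hba ((hf maa').trans h₂'))
      · intro h hfa h₁ h₂
        exact Zigzag.trans
          (Relation.ReflTransGen.single (Or.inl ⟨ObjectProperty.homMk (P := _) (homOfLE maa')⟩))
          (h (h₁.trans (hf maa')) hfa')
    obtain ⟨q, -, hq⟩ := key hf b b'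
      (fun a => ∀ (h₁ : b ≤ f a) (h₂ : f a ≤ b'), Zigzag (⟨a, h₁, h₂⟩ :
        ObjectProperty.FullSubcategory fun a : A => b ≤ f a ∧ f a ≤ b') a₁el) hb hfull hL
    have hq1 := hq a₁ ha₁ ha₁'
    have hqT : q := by
      rw [hq1]; intro _ _ h₁ h₂; exact Zigzag.refl a₁el
    have hz : ∀ j : ObjectProperty.FullSubcategory fun a : A => b ≤ f a ∧ f a ≤ b',
        Zigzag j a₁el := by
      intro j
      have hj := hq j.obj j.property.1 j.property.2
      rw [hj] at hqT
      exact hqT le_rfl j.property.2 j.property.1 j.property.2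
    haveI : Nonempty (ObjectProperty.FullSubcategory fun a : A => b ≤ f a ∧ f a ≤ b') := ⟨a₁el⟩
    exact zigzag_isConnected fun j₁ j₂ => (hz j₁).trans (hz j₂).symm
  · intro hconn C instC
    constructor
    · -- fullness
      refine ⟨fun {G H} γ => ?_⟩
      have pick : ∀ bb : B, ObjectProperty.FullSubcategory fun a : A => bb ≤ f a ∧ f a ≤ bb :=
        fun bb => Classical.choice (hconn bb bb le_rfl).is_nonempty
      refine ⟨{ app := fun bb => phi hf γ (pick bb), naturality := ?_ }, ?_⟩
      · intro b₁ b₂ m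
        have e1 : (homOfLE ((m.le).trans (pick b₂).property.1) : b₁ ⟶ f (pick b₂).obj)
            = m ≫ homOfLE (pick b₂).property.1 := Subsingleton.elim _ _
        have c1 : phi hf γ (⟨(pick b₂).obj, (m.le).trans (pick b₂).property.1,
              (pick b₂).property.2⟩ : ObjectProperty.FullSubcategory fun a : A => b₁ ≤ f a ∧ f a ≤ b₂)
            = G.map m ≫ phi hf γ (pick b₂) := by
          unfold phi
          rw [e1, Functor.map_comp, Category.assoc]
        have e2 : (homOfLE ((pick b₁).property.2.trans m.le) : f (pick b₁).obj ⟶ b₂)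
            = homOfLE (pick b₁).property.2 ≫ m := Subsingleton.elim _ _
        have c2 : phi hf γ (⟨(pick b₁).obj, (pick b₁).property.1,
              (pick b₁).property.2.trans m.le⟩ :
              ObjectProperty.FullSubcategory fun a : A => b₁ ≤ f a ∧ f a ≤ b₂)
            = phi hf γ (pick b₁) ≫ H.map m := by
          unfold phi
          erw [e2, H.map_comp]
          exact ((Category.assoc _ _ _).trans (congrArg (_ ≫ ·) (Category.assoc _ _ _))).symm
        rw [← c1, ← c2]
        exact phi_const hf γ (hconn b₁ b₂ m.le) _ _
      · apply NatTrans.ext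
        funext a
        show phi hf γ (pick (f a)) = γ.app a
        rw [phi_const hf γ (hconn (f a) (f a) le_rfl) (pick (f a)) ⟨a, le_rfl, le_rfl⟩]
        simp [phi]
        exact Category.comp_id _
    · -- faithfulness
      refine ⟨fun {G H} α β hab => ?_⟩
      apply NatTrans.ext
      funext bb
      obtain ⟨a, h₁, h₂⟩ := Classical.choice (hconn bb bb le_rfl).is_nonempty
      rw [app_eq α h₁ h₂, app_eq β h₁ h₂]
      have : α.app (f a) = β.app (f a) := NatTrans.congr_app hab a
      rw [this]
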